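/- Let n > 4, let (1,j,k) and (1,p,q) be cubic MRS functions in n variables (1 < j, k ≤ n with j ≠ k, and 1 < p, q ≤ n with p ≠ q), and suppose μ·(1,j,k) = (1,p,q) for some permutation μ of {1,...,n} which preserves rotation symmetry. Then there exists a permutation σ of {1,...,n} such that: σ·(1,j,k) = (1,p,q); σ(1) = 1; σ(i) = ((i−1)(σ(2)−1) + 1) Mod n for all 1 ≤ i ≤ n; gcd(σ(2)−1, n) = 1; and the pattern of the term [1, σ(j), σ(k)] equals (σ(2)−1)·(j−1; k−1; k−j) computed Mod n, i.e., σ(j)−1 ≡ (σ(2)−1)(j−1), σ(k)−1 ≡ (σ(2)−1)(k−1), and σ(k)−σ(j) ≡ (σ(2)−1)(k−j), all modulo n. -/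

import Mathlib

/-- Boolean functions in `n` variables, with variables indexed by `ZMod n`
(index `i : ZMod n` corresponds to the variable `x_{i+1}` in 1-indexed notation,
so that "`a Mod n`" arithmetic on subscripts becomes arithmetic in `ZMod n`). -/
abbrev BF (n : ℕ) := (ZMod n → ZMod 2) → ZMod 2

/-- The cubic MRS function `(1,j,k)` in `n` variables:
`x ↦ Σ_{i=1}^n x_i x_{(i+j-1) Mod n} x_{(i+k-1) Mod n}`, the sum taken in `GF(2)`. -/
def cubicMRS (n : ℕ) [NeZero n] (j k : ℕ) : BF n :=
  fun x => ∑ i : ZMod n,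
    x i * x (i + ((j - 1 : ℕ) : ZMod n)) * x (i + ((k - 1 : ℕ) : ZMod n))

/-- `C_n`: the set of all cubic MRS functions `(1,j,k)`, `1 < j < k ≤ n`, in `n` variables. -/
def cubicSet (n : ℕ) [NeZero n] : Set (BF n) :=
  {f | ∃ j k : ℕ, 1 < j ∧ j < k ∧ k ≤ n ∧ f = cubicMRS n j k}

/-- The set of cubic MRS functions `(1,j,k)` with `1 < j, k ≤ n`, `j ≠ k`. -/
def cubicSetNe (n : ℕ) [NeZero n] : Set (BF n) :=
  {f | ∃ j k : ℕ, 1 < j ∧ j ≤ n ∧ 1 < k ∧ k ≤ n ∧ j ≠ k ∧ f = cubicMRS n j k}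

/-- The action of a permutation `μ` of the variables on a Boolean function:
`(μ·f)(x₁,…,xₙ) = f(x_{μ(1)},…,x_{μ(n)})`. -/
def permAct {n : ℕ} (μ : Equiv.Perm (ZMod n)) (f : BF n) : BF n :=
  fun x => f (fun i => x (μ i))

/-- A Boolean function is rotation symmetric if it is invariant under the cyclic
shift of the variables. -/
def rotSym {n : ℕ} (f : BF n) : Prop :=
  ∀ x : ZMod n → ZMod 2, f (fun i => x (i + 1)) = f x

/-- A permutation `μ` preserves rotation symmetry (for cubic MRS functions in `n`
variables) if `μ·f` is rotation symmetric for every cubic MRS function `f`. -/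
def preservesRS (n : ℕ) [NeZero n] (μ : Equiv.Perm (ZMod n)) : Prop :=
  ∀ f ∈ cubicSetNe n, rotSym (permAct μ f)


section Aux

variable {n : ℕ}

lemma zmk (hn : 4 < n) {c : ℕ} (h0 : 0 < c) (h4 : c ≤ 4) : (c : ZMod n) ≠ 0 := by
  intro h
  rw [ZMod.natCast_eq_zero_iff] at h
  have := Nat.le_of_dvd h0 h
  omega

lemma zm1 (hn : 4 < n) : ¬ ((1 : ZMod n) = 0) := by
  have := zmk hn (c := 1) (by norm_num) (by norm_num); simpa using this

lemma zm2 (hn : 4 < n) : ¬ ((2 : ZMod n) = 0) := by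
  have := zmk hn (c := 2) (by norm_num) (by norm_num); simpa using this

lemma zm3 (hn : 4 < n) : ¬ ((3 : ZMod n) = 0) := by
  have := zmk hn (c := 3) (by norm_num) (by norm_num); simpa using this

lemma zm4 (hn : 4 < n) : ¬ ((4 : ZMod n) = 0) := by
  have := zmk hn (c := 4) (by norm_num) (by norm_num); simpa using this

lemma triple_eq_of_mem (hn : 4 < n) {A B C r : ZMod n}
    (h0 : r = A ∨ r = B ∨ r = C)
    (h1 : r + 1 = A ∨ r + 1 = B ∨ r + 1 = C)
    (h2 : r + 2 = A ∨ r + 2 = B ∨ r + 2 = C) :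
    ∀ x : ZMod n, (x = A ∨ x = B ∨ x = C) ↔ (x = r ∨ x = r + 1 ∨ x = r + 2) := by
  rcases h0 with h0|h0|h0 <;> rcases h1 with h1|h1|h1 <;> rcases h2 with h2|h2|h2 <;>
  first
  | (intro x; rw [← h0, ← h1, ← h2]; all_goals tauto)
  | (exfalso; first
      | exact zm1 hn (by linear_combination h1 - h0)
      | exact zm1 hn (by linear_combination h2 - h1)
      | exact zm2 hn (by linear_combination h2 - h0))

lemma step_core (hn : 4 < n) {r r' u : ZMod n} (hne : r' ≠ r)
    (E0 : (r' = r ∨ r' = r + 1 ∨ r' = r + 2) ∨ r' = u)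
    (E1 : (r' + 1 = r ∨ r' + 1 = r + 1 ∨ r' + 1 = r + 2) ∨ r' + 1 = u)
    (E2 : (r' + 2 = r ∨ r' + 2 = r + 1 ∨ r' + 2 = r + 2) ∨ r' + 2 = u) :
    r' = r + 1 ∨ r' = r - 1 := by
  rcases E0 with (e0|e0|e0)|e0 <;> rcases E1 with (e1|e1|e1)|e1 <;>
    rcases E2 with (e2|e2|e2)|e2 <;>
  first
  | exact Or.inl (by linear_combination e0)
  | exact Or.inl (by linear_combination e1)
  | exact Or.inl (by linear_combination e2)
  | exact Or.inr (by linear_combination e0)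
  | exact Or.inr (by linear_combination e1)
  | exact Or.inr (by linear_combination e2)
  | exact absurd (show r' = r by first
      | linear_combination e0 | linear_combination e1 | linear_combination e2) hne
  | exact absurd (show (1:ZMod n) = 0 by first
      | linear_combination e0 - e1 | linear_combination e1 - e0
      | linear_combination e1 - e2 | linear_combination e2 - e1
      | linear_combination e0 - e2 | linear_combination e2 - e0) (zm1 hn)
  | exact absurd (show (2:ZMod n) = 0 by first
      | linear_combination e0 - e1 | linear_combination e1 - e0
      | linear_combination e1 - e2 | linear_combination e2 - e1
      | linear_combination e0 - e2 | linear_combination e2 - e0) (zm2 hn)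
  | exact absurd (show (3:ZMod n) = 0 by first
      | linear_combination e0 - e1 | linear_combination e1 - e0
      | linear_combination e1 - e2 | linear_combination e2 - e1
      | linear_combination e0 - e2 | linear_combination e2 - e0) (zm3 hn)
  | exact absurd (show (4:ZMod n) = 0 by first
      | linear_combination e0 - e1 | linear_combination e1 - e0
      | linear_combination e1 - e2 | linear_combination e2 - e1
      | linear_combination e0 - e2 | linear_combination e2 - e0) (zm4 hn)

lemma stepA (hn : 4 < n) [NeZero n] (ν : Equiv.Perm (ZMod n))
    (H : ∀ x : ZMod n → ZMod 2,
      (∑ i : ZMod n, x (ν i) * x (ν (i+1)) * x (ν (i+2))) =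
      ∑ i : ZMod n, x i * x (i+1) * x (i+2)) (m : ZMod n) :
    ∃ r : ZMod n, ∀ x : ZMod n,
      (x = ν m ∨ x = ν (m+1) ∨ x = ν (m+2)) ↔ (x = r ∨ x = r + 1 ∨ x = r + 2) := by
  classical
  obtain ⟨r, hr0, hr1, hr2⟩ : ∃ r : ZMod n,
      (r = ν m ∨ r = ν (m+1) ∨ r = ν (m+2)) ∧
      (r + 1 = ν m ∨ r + 1 = ν (m+1) ∨ r + 1 = ν (m+2)) ∧
      (r + 2 = ν m ∨ r + 2 = ν (m+1) ∨ r + 2 = ν (m+2)) := by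
    by_contra hcon
    have key := H (fun z => if (z = ν m ∨ z = ν (m+1) ∨ z = ν (m+2)) then (1:ZMod 2) else 0)
    have hL : (∑ i : ZMod n,
        (if (ν i = ν m ∨ ν i = ν (m+1) ∨ ν i = ν (m+2)) then (1:ZMod 2) else 0) *
        (if (ν (i+1) = ν m ∨ ν (i+1) = ν (m+1) ∨ ν (i+1) = ν (m+2)) then (1:ZMod 2) else 0) *
        (if (ν (i+2) = ν m ∨ ν (i+2) = ν (m+1) ∨ ν (i+2) = ν (m+2)) then (1:ZMod 2) else 0))
        = 1 := by
      have h1 : ∀ i : ZMod n,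
          (if (ν i = ν m ∨ ν i = ν (m+1) ∨ ν i = ν (m+2)) then (1:ZMod 2) else 0) *
          (if (ν (i+1) = ν m ∨ ν (i+1) = ν (m+1) ∨ ν (i+1) = ν (m+2)) then (1:ZMod 2) else 0) *
          (if (ν (i+2) = ν m ∨ ν (i+2) = ν (m+1) ∨ ν (i+2) = ν (m+2)) then (1:ZMod 2) else 0)
          = if i = m then 1 else 0 := by
        intro i
        by_cases him : i = m
        · rw [if_pos (Or.inl (by rw [him])), if_pos (Or.inr (Or.inl (by rw [him]))),
            if_pos (Or.inr (Or.inr (by rw [him]))), if_pos him]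
          norm_num
        · rw [if_neg him]
          by_cases c0 : (ν i = ν m ∨ ν i = ν (m+1) ∨ ν i = ν (m+2))
          · by_cases c2 : (ν (i+2) = ν m ∨ ν (i+2) = ν (m+1) ∨ ν (i+2) = ν (m+2))
            · exfalso
              have d0 : i = m ∨ i = m+1 ∨ i = m+2 := by
                rcases c0 with h|h|h
                exacts [Or.inl (ν.injective h), Or.inr (Or.inl (ν.injective h)),
                  Or.inr (Or.inr (ν.injective h))]
              have d2 : i+2 = m ∨ i+2 = m+1 ∨ i+2 = m+2 := by
                rcases c2 with h|h|h
                exacts [Or.inl (ν.injective h), Or.inr (Or.inl (ν.injective h)),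
                  Or.inr (Or.inr (ν.injective h))]
              rcases d0 with h0|h0|h0
              · exact him h0
              all_goals rcases d2 with h2'|h2'|h2' <;>
                first
                | exact zm1 hn (by first | linear_combination h2' - h0 | linear_combination h0 - h2')
                | exact zm2 hn (by first | linear_combination h2' - h0 | linear_combination h0 - h2')
                | exact zm3 hn (by first | linear_combination h2' - h0 | linear_combination h0 - h2')
                | exact zm4 hn (by first | linear_combination h2' - h0 | linear_combination h0 - h2')
            · rw [if_neg c2, mul_zero]
          · rw [if_neg c0, zero_mul, zero_mul]
      rw [Finset.sum_congr rfl fun i _ => h1 i]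
      simp
    have h2 : ∀ i : ZMod n,
        (if (i = ν m ∨ i = ν (m+1) ∨ i = ν (m+2)) then (1:ZMod 2) else 0) *
        (if (i+1 = ν m ∨ i+1 = ν (m+1) ∨ i+1 = ν (m+2)) then (1:ZMod 2) else 0) *
        (if (i+2 = ν m ∨ i+2 = ν (m+1) ∨ i+2 = ν (m+2)) then (1:ZMod 2) else 0) = 0 := by
      intro i
      by_cases c0 : (i = ν m ∨ i = ν (m+1) ∨ i = ν (m+2))
      · by_cases c1 : (i+1 = ν m ∨ i+1 = ν (m+1) ∨ i+1 = ν (m+2))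
        · by_cases c2 : (i+2 = ν m ∨ i+2 = ν (m+1) ∨ i+2 = ν (m+2))
          · exact absurd ⟨c0, c1, c2⟩ (not_exists.mp hcon i)
          · rw [if_neg c2, mul_zero]
        · rw [if_neg c1, mul_zero, zero_mul]
      · rw [if_neg c0, zero_mul, zero_mul]
    have : (1 : ZMod 2) = 0 := by
      rw [← hL, key, Finset.sum_congr rfl fun i _ => h2 i]
      simp
    exact one_ne_zero this
  exact ⟨r, triple_eq_of_mem hn hr0 hr1 hr2⟩

lemma nu_rot_or_refl (hn : 4 < n) [NeZero n] (ν : Equiv.Perm (ZMod n))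
    (H : ∀ x : ZMod n → ZMod 2,
      (∑ i : ZMod n, x (ν i) * x (ν (i+1)) * x (ν (i+2))) =
      ∑ i : ZMod n, x i * x (i+1) * x (i+2)) :
    (∃ c : ZMod n, ∀ i, ν i = i + c) ∨ (∃ c : ZMod n, ∀ i, ν i = c - i) := by
  choose g hg using stepA hn ν H
  -- step: neighbors
  have hstep : ∀ m : ZMod n, g (m+1) = g m + 1 ∨ g (m+1) = g m - 1 := by
    intro m
    have hm := hg m
    have e1 : m + 1 + 1 = m + 2 := by ring
    have e2 : m + 1 + 2 = m + 3 := by ring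
    have hm1 := hg (m+1)
    simp only [e1, e2] at hm1
    have hne : g (m+1) ≠ g m := by
      intro h
      have h2 := (hm (ν m)).mp (Or.inl rfl)
      rw [← h] at h2
      have h3 := (hm1 (ν m)).mpr h2
      rcases h3 with h'|h'|h' <;> (
        have := ν.injective h'
        first
        | exact zm1 hn (by first | linear_combination this | linear_combination -this)
        | exact zm2 hn (by first | linear_combination this | linear_combination -this)
        | exact zm3 hn (by first | linear_combination this | linear_combination -this))
    have M1 : ν (m+1) = g m ∨ ν (m+1) = g m + 1 ∨ ν (m+1) = g m + 2 :=
      (hm _).mp (Or.inr (Or.inl rfl))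
    have M2 : ν (m+2) = g m ∨ ν (m+2) = g m + 1 ∨ ν (m+2) = g m + 2 :=
      (hm _).mp (Or.inr (Or.inr rfl))
    have D0 : g (m+1) = ν (m+1) ∨ g (m+1) = ν (m+2) ∨ g (m+1) = ν (m+3) :=
      (hm1 _).mpr (Or.inl rfl)
    have D1 : g (m+1) + 1 = ν (m+1) ∨ g (m+1) + 1 = ν (m+2) ∨ g (m+1) + 1 = ν (m+3) :=
      (hm1 _).mpr (Or.inr (Or.inl rfl))
    have D2 : g (m+1) + 2 = ν (m+1) ∨ g (m+1) + 2 = ν (m+2) ∨ g (m+1) + 2 = ν (m+3) :=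
      (hm1 _).mpr (Or.inr (Or.inr rfl))
    have E0 : (g (m+1) = g m ∨ g (m+1) = g m + 1 ∨ g (m+1) = g m + 2) ∨ g (m+1) = ν (m+3) := by
      rcases D0 with h|h|h
      · exact Or.inl (by rw [h]; exact M1)
      · exact Or.inl (by rw [h]; exact M2)
      · exact Or.inr h
    have E1 : (g (m+1) + 1 = g m ∨ g (m+1) + 1 = g m + 1 ∨ g (m+1) + 1 = g m + 2) ∨
        g (m+1) + 1 = ν (m+3) := by
      rcases D1 with h|h|h
      · exact Or.inl (by rw [h]; exact M1)
      · exact Or.inl (by rw [h]; exact M2)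
      · exact Or.inr h
    have E2 : (g (m+1) + 2 = g m ∨ g (m+1) + 2 = g m + 1 ∨ g (m+1) + 2 = g m + 2) ∨
        g (m+1) + 2 = ν (m+3) := by
      rcases D2 with h|h|h
      · exact Or.inl (by rw [h]; exact M1)
      · exact Or.inl (by rw [h]; exact M2)
      · exact Or.inr h
    exact step_core hn hne E0 E1 E2
  -- ν m ∈ T_{g m}
  have hmem : ∀ m : ZMod n, ν m = g m ∨ ν m = g m + 1 ∨ ν m = g m + 2 :=
    fun m => (hg m (ν m)).mp (Or.inl rfl)
  -- ν (m+2) ∈ T_{g m}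
  have hmem2 : ∀ m : ZMod n, ν (m+2) = g m ∨ ν (m+2) = g m + 1 ∨ ν (m+2) = g m + 2 :=
    fun m => (hg m (ν (m+2))).mp (Or.inr (Or.inr rfl))
  rcases hstep 0 with hs|hs
  · -- rotation case
    left
    have hpair : ∀ m : ℕ, g ((m : ZMod n)) = g 0 + (m : ZMod n) ∧
        g ((m : ZMod n) + 1) = g 0 + (m : ZMod n) + 1 := by
      intro m
      induction m with
      | zero => refine ⟨by simp, by simpa using hs⟩
      | succ m ih =>
        obtain ⟨ih1, ih2⟩ := ih
        have hcast : ((m + 1 : ℕ) : ZMod n) = (m : ZMod n) + 1 := by push_cast; ring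
        refine ⟨by rw [hcast, ih2]; ring, ?_⟩
        rw [hcast]
        rcases hstep ((m : ZMod n) + 1) with h|h
        · rw [h, ih2]; ring
        · exfalso
          have heq : g ((m : ZMod n) + 1 + 1) = g ((m : ZMod n)) := by
            rw [h, ih2, ih1]; ring
          have h1 := (hg ((m : ZMod n)) (ν ((m : ZMod n)))).mp (Or.inl rfl)
          rw [← heq] at h1
          have h2 := (hg ((m : ZMod n) + 1 + 1) (ν ((m : ZMod n)))).mpr h1
          rcases h2 with h'|h'|h' <;> (
            have := ν.injective h'
            first
            | exact zm2 hn (by first | linear_combination this | linear_combination -this)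
            | exact zm3 hn (by first | linear_combination this | linear_combination -this)
            | exact zm4 hn (by first | linear_combination this | linear_combination -this))
    have hlin : ∀ i : ZMod n, g i = g 0 + i := by
      intro i
      have := (hpair i.val).1
      rwa [ZMod.natCast_zmod_val i] at this
    refine ⟨g 0, ?_⟩
    intro i
    have hA := hmem i
    have hB := hmem2 (i - 2)
    have e : i - 2 + 2 = i := by ring
    rw [e] at hB
    rw [hlin i] at hA
    rw [hlin (i - 2)] at hB
    rcases hA with e1|e1|e1 <;> rcases hB with e2|e2|e2 <;>
    first
    | exact (by linear_combination e1)
    | exact absurd (show (1:ZMod n) = 0 by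
        first | linear_combination e1 - e2 | linear_combination e2 - e1) (zm1 hn)
    | exact absurd (show (2:ZMod n) = 0 by
        first | linear_combination e1 - e2 | linear_combination e2 - e1) (zm2 hn)
    | exact absurd (show (3:ZMod n) = 0 by
        first | linear_combination e1 - e2 | linear_combination e2 - e1) (zm3 hn)
    | exact absurd (show (4:ZMod n) = 0 by
        first | linear_combination e1 - e2 | linear_combination e2 - e1) (zm4 hn)
  · -- reflection case
    right
    have hpair : ∀ m : ℕ, g ((m : ZMod n)) = g 0 - (m : ZMod n) ∧
        g ((m : ZMod n) + 1) = g 0 - (m : ZMod n) - 1 := by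
      intro m
      induction m with
      | zero => refine ⟨by simp, by simpa using hs⟩
      | succ m ih =>
        obtain ⟨ih1, ih2⟩ := ih
        have hcast : ((m + 1 : ℕ) : ZMod n) = (m : ZMod n) + 1 := by push_cast; ring
        refine ⟨by rw [hcast, ih2]; ring, ?_⟩
        rw [hcast]
        rcases hstep ((m : ZMod n) + 1) with h|h
        · exfalso
          have heq : g ((m : ZMod n) + 1 + 1) = g ((m : ZMod n)) := by
            rw [h, ih2, ih1]; ring
          have h1 := (hg ((m : ZMod n)) (ν ((m : ZMod n)))).mp (Or.inl rfl)
          rw [← heq] at h1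
          have h2 := (hg ((m : ZMod n) + 1 + 1) (ν ((m : ZMod n)))).mpr h1
          rcases h2 with h'|h'|h' <;> (
            have := ν.injective h'
            first
            | exact zm2 hn (by first | linear_combination this | linear_combination -this)
            | exact zm3 hn (by first | linear_combination this | linear_combination -this)
            | exact zm4 hn (by first | linear_combination this | linear_combination -this))
        · rw [h, ih2]; ring
    have hlin : ∀ i : ZMod n, g i = g 0 - i := by
      intro i
      have := (hpair i.val).1
      rwa [ZMod.natCast_zmod_val i] at this
    refine ⟨g 0 + 2, ?_⟩
    intro i
    have hA := hmem i
    have hB := hmem2 (i - 2)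
    have e : i - 2 + 2 = i := by ring
    rw [e] at hB
    rw [hlin i] at hA
    rw [hlin (i - 2)] at hB
    rcases hA with e1|e1|e1 <;> rcases hB with e2|e2|e2 <;>
    first
    | exact (by linear_combination e1)
    | exact absurd (show (1:ZMod n) = 0 by
        first | linear_combination e1 - e2 | linear_combination e2 - e1) (zm1 hn)
    | exact absurd (show (2:ZMod n) = 0 by
        first | linear_combination e1 - e2 | linear_combination e2 - e1) (zm2 hn)
    | exact absurd (show (3:ZMod n) = 0 by
        first | linear_combination e1 - e2 | linear_combination e2 - e1) (zm3 hn)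
    | exact absurd (show (4:ZMod n) = 0 by
        first | linear_combination e1 - e2 | linear_combination e2 - e1) (zm4 hn)

lemma rotSym_shift [NeZero n] {f : BF n} (hf : rotSym f) (a : ZMod n) (x : ZMod n → ZMod 2) :
    f (fun i => x (i + a)) = f x := by
  suffices h : ∀ (m : ℕ) (x : ZMod n → ZMod 2), f (fun i => x (i + (m : ZMod n))) = f x by
    have := h a.val x
    rwa [ZMod.natCast_zmod_val a] at this
  intro m
  induction m with
  | zero => intro x; simp
  | succ m ih =>
    intro x
    have e : ∀ i : ZMod n, i + ((m + 1 : ℕ) : ZMod n) = i + 1 + (m : ZMod n) := by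
      intro i; push_cast; ring
    calc f (fun i => x (i + ((m + 1 : ℕ) : ZMod n)))
        = f (fun i => x (i + 1 + (m : ZMod n))) := by simp only [e]
      _ = f (fun i => x (i + (m : ZMod n))) := hf (fun j => x (j + (m : ZMod n)))
      _ = f x := ih x

lemma rotSym_cubic (n : ℕ) [NeZero n] (j k : ℕ) : rotSym (cubicMRS n j k) := by
  intro x
  unfold cubicMRS
  refine Fintype.sum_equiv (Equiv.addRight (1 : ZMod n)) _ _ ?_
  intro i
  simp only [Equiv.coe_addRight]
  ring_nf

end Aux

/-- If `μ` preserves rotation symmetry and maps the cubic MRS function `(1,j,k)` to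
`(1,p,q)` (in `n > 4` variables), then there is a permutation `σ` doing the same with
`σ(1) = 1`, satisfying `σ(i) = ((i-1)(σ(2)-1)+1) Mod n` for all `i`, with
`gcd(σ(2)-1, n) = 1`, and such that the pattern of the term `[1, σ(j), σ(k)]` is
`(σ(2)-1)(j-1; k-1; k-j)` mod `n`.  In the 0-indexed coordinates used here
(`σ 1` plays the role of `σ(2) - 1`, and `(j-1 : ZMod n)` the role of subscript `j`),
these conditions read as below. -/



theorem exists_sigma_of_permEquiv (n j k p q : ℕ) [NeZero n] (hn : 4 < n)
    (hj : 1 < j) (hjn : j ≤ n) (hk : 1 < k) (hkn : k ≤ n) (hjk : j ≠ k)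
    (hp : 1 < p) (hpn : p ≤ n) (hq : 1 < q) (hqn : q ≤ n) (hpq : p ≠ q)
    (μ : Equiv.Perm (ZMod n)) (hμ : preservesRS n μ)
    (hact : permAct μ (cubicMRS n j k) = cubicMRS n p q) :
    ∃ σ : Equiv.Perm (ZMod n),
      permAct σ (cubicMRS n j k) = cubicMRS n p q ∧
      σ 0 = 0 ∧
      (∀ i : ZMod n, σ i = σ 1 * i) ∧
      Nat.gcd ((σ 1).val) n = 1 ∧
      σ (((j - 1 : ℕ) : ZMod n)) = σ 1 * ((j - 1 : ℕ) : ZMod n) ∧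
      σ (((k - 1 : ℕ) : ZMod n)) = σ 1 * ((k - 1 : ℕ) : ZMod n) ∧
      σ (((k - 1 : ℕ) : ZMod n)) - σ (((j - 1 : ℕ) : ZMod n)) =
        σ 1 * (((k - 1 : ℕ) : ZMod n) - ((j - 1 : ℕ) : ZMod n)) := by
  classical
  have hf1mem : cubicMRS n 2 3 ∈ cubicSetNe n :=
    ⟨2, 3, by norm_num, by omega, by norm_num, by omega, by norm_num, rfl⟩
  have hrs := hμ _ hf1mem
  obtain ⟨ν, hνdef⟩ : ∃ ν : Equiv.Perm (ZMod n), ∀ i, ν i = μ.symm (μ i + 1) :=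
    ⟨(μ.trans (Equiv.addRight 1)).trans μ.symm, fun i => rfl⟩
  have H : ∀ x : ZMod n → ZMod 2,
      (∑ i : ZMod n, x (ν i) * x (ν (i+1)) * x (ν (i+2))) =
      ∑ i : ZMod n, x i * x (i+1) * x (i+2) := by
    intro x
    have h := hrs (fun z => x (μ.symm z))
    simp only [permAct, cubicMRS, Equiv.symm_apply_apply] at h
    norm_num at h
    simp only [hνdef]
    convert h using 2
  rcases nu_rot_or_refl hn ν H with ⟨c, hc⟩ | ⟨c, hc⟩
  · -- rotation case
    have hμc : ∀ i, μ (i + c) = μ i + 1 := by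
      intro i
      have h := hc i
      rw [hνdef, Equiv.symm_apply_eq] at h
      exact h.symm
    have mu_iter : ∀ (a : ℕ) (i : ZMod n), μ (i + (a : ZMod n) * c) = μ i + (a : ZMod n) := by
      intro a
      induction a with
      | zero => intro i; simp
      | succ a ih =>
        intro i
        have e : i + ((a + 1 : ℕ) : ZMod n) * c = (i + c) + (a : ZMod n) * c := by
          push_cast; ring
        rw [e, ih (i + c), hμc i]
        push_cast; ring
    have hgcd : Nat.gcd c.val n = 1 := by
      by_contra hgc
      have hdn : Nat.gcd c.val n ∣ n := Nat.gcd_dvd_right _ _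
      have hdc : Nat.gcd c.val n ∣ c.val := Nat.gcd_dvd_left _ _
      have hd0 : 0 < Nat.gcd c.val n := Nat.gcd_pos_of_pos_right _ (by omega)
      set a := n / Nat.gcd c.val n with ha
      have ha0 : 0 < a := Nat.div_pos (Nat.le_of_dvd (by omega) hdn) hd0
      have han : a < n := Nat.div_lt_self (by omega) (by omega)
      have hac : (a : ZMod n) * c = 0 := by
        have hdvd : n ∣ a * c.val := by
          obtain ⟨e, he⟩ := hdc
          refine ⟨e, ?_⟩
          rw [he, ha, ← mul_assoc, Nat.div_mul_cancel hdn]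
        calc (a : ZMod n) * c = ((a * c.val : ℕ) : ZMod n) := by
              push_cast [ZMod.natCast_zmod_val]; ring
          _ = 0 := by rwa [ZMod.natCast_eq_zero_iff]
      have h1 := mu_iter a 0
      rw [hac, add_zero] at h1
      have h2 : ((a : ℕ) : ZMod n) = 0 := by
        have := h1.symm
        rwa [add_eq_left] at this
      rw [ZMod.natCast_eq_zero_iff] at h2
      have := Nat.le_of_dvd ha0 h2
      omega
    set u : (ZMod n)ˣ := ZMod.unitOfCoprime c.val hgcd with hu
    have hucoe : (u : ZMod n) = c := by
      rw [hu, ZMod.coe_unitOfCoprime, ZMod.natCast_zmod_val]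
    have htc : ((u⁻¹ : (ZMod n)ˣ) : ZMod n) * c = 1 := by
      rw [← hucoe]
      exact u.inv_mul
    have hct : c * ((u⁻¹ : (ZMod n)ˣ) : ZMod n) = 1 := by rw [mul_comm]; exact htc
    set t : ZMod n := ((u⁻¹ : (ZMod n)ˣ) : ZMod n) with htdef
    let σ : Equiv.Perm (ZMod n) :=
      { toFun := fun i => t * i
        invFun := fun i => c * i
        left_inv := fun i => by show c * (t * i) = i; rw [← mul_assoc, hct, one_mul]
        right_inv := fun i => by show t * (c * i) = i; rw [← mul_assoc, htc, one_mul] }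
    have hσ : ∀ i, σ i = t * i := fun i => rfl
    have hmul : ∀ i : ZMod n, σ i = σ 1 * i := by
      intro i; rw [hσ, hσ, mul_one]
    have hform : ∀ i : ZMod n, μ i = μ 0 + t * i := by
      intro i
      have h1 := mu_iter (t * i).val 0
      rw [ZMod.natCast_zmod_val] at h1
      have e2 : (0 : ZMod n) + t * i * c = i := by linear_combination i * htc
      rw [e2] at h1
      rw [h1]
    have hFrs : rotSym (cubicMRS n j k) := rotSym_cubic n j k
    have hGrs : rotSym (permAct σ (cubicMRS n j k)) := by
      intro x
      show cubicMRS n j k (fun i => x (σ i + 1)) = cubicMRS n j k (fun i => x (σ i))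
      have e : ∀ i : ZMod n, σ i + 1 = σ (i + c) := by
        intro i
        rw [hσ, hσ]
        linear_combination -htc
      simp only [e]
      exact rotSym_shift hFrs c (fun i => x (σ i))
    have hkey : permAct σ (cubicMRS n j k) = permAct μ (cubicMRS n j k) := by
      funext x
      show cubicMRS n j k (fun i => x (σ i)) = cubicMRS n j k (fun i => x (μ i))
      have e : ∀ i : ZMod n, μ i = σ i + μ 0 := by
        intro i
        rw [hform i, hσ]; ring
      calc cubicMRS n j k (fun i => x (σ i))
          = permAct σ (cubicMRS n j k) x := rfl
        _ = permAct σ (cubicMRS n j k) (fun z => x (z + μ 0)) :=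
            (rotSym_shift hGrs (μ 0) x).symm
        _ = cubicMRS n j k (fun i => x (σ i + μ 0)) := rfl
        _ = cubicMRS n j k (fun i => x (μ i)) := by simp only [← e]
    have hgcdt : Nat.gcd ((σ 1).val) n = 1 := by
      have h1 : σ 1 = t := by rw [hσ, mul_one]
      rw [h1]
      have hunit : IsUnit ((t.val : ℕ) : ZMod n) := by
        rw [ZMod.natCast_zmod_val]
        exact ⟨u⁻¹, htdef.symm⟩
      exact (ZMod.isUnit_iff_coprime t.val n).mp hunit
    refine ⟨σ, hkey.trans hact, ?_, hmul, hgcdt, hmul _, hmul _, ?_⟩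
    · rw [hσ, mul_zero]
    · rw [hmul (((k - 1 : ℕ) : ZMod n)), hmul (((j - 1 : ℕ) : ZMod n))]; ring
  · -- reflection case: contradiction
    exfalso
    have h2 : ν (ν 0) = 0 := by rw [hc (ν 0), hc 0]; ring
    rw [hνdef (ν 0), hνdef 0, Equiv.apply_symm_apply, Equiv.symm_apply_eq] at h2
    exact zm2 hn (by linear_combination h2)
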